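/- Let S be a nonempty finite set of generators, and let x° = (x_i°)_{i∈S} minimize Σ_{i∈S} c_i(x_i) over {x : 0 ≤ x_i ≤ x_i^max for all i ∈ S, Σ_{i∈S} x_i = d'}, where 0 ≤ d' ≤ Σ_{i∈S} x_i^max. Then there exists λ ∈ ℝ such that: ∂₋c_i(x_i^max) ≤ λ for every i ∈ S with x_i° = x_i^max; λ ≤ ∂₊c_i(0) for every i ∈ S with x_i° = 0; and ∂₋c_i(x_i°) ≤ λ ≤ ∂₊c_i(x_i°) for every i ∈ S with 0 < x_i° < x_i^max. -/
import Mathlib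

open Filter Set Topology


lemma tendsto_slope_right_aux (f : ℝ → ℝ) (d y M : ℝ) (hy : y < M)
    (h : HasDerivWithinAt f d (Set.Icc y M) y) :
    Tendsto (fun ε => (f (y + ε) - f y) / ε) (𝓝[>] (0:ℝ)) (𝓝 d) := by
  rw [hasDerivWithinAt_iff_tendsto_slope] at h
  have h1 : Tendsto (fun ε : ℝ => y + ε) (𝓝[>] 0) (𝓝[Set.Icc y M \ {y}] y) := by
    rw [tendsto_nhdsWithin_iff]
    constructor
    · have : Tendsto (fun ε : ℝ => y + ε) (𝓝 0) (𝓝 (y + 0)) :=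
        tendsto_const_nhds.add tendsto_id
      simpa using this.mono_left nhdsWithin_le_nhds
    · filter_upwards [Ioo_mem_nhdsGT_of_mem (show (0:ℝ) ∈ Set.Ico 0 (M - y) from
        ⟨le_refl 0, by linarith⟩)] with ε hε
      refine ⟨⟨by linarith [hε.1], by linarith [hε.2]⟩, ?_⟩
      simp only [Set.mem_singleton_iff]
      intro hc; linarith [hε.1, (by linarith : ε = 0)]
  have h2 := h.comp h1
  refine h2.congr fun ε => ?_
  simp only [Function.comp_apply, slope_def_field]
  congr 1
  ring

lemma tendsto_slope_left_aux (f : ℝ → ℝ) (d y : ℝ) (hy : 0 < y)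
    (h : HasDerivWithinAt f d (Set.Icc 0 y) y) :
    Tendsto (fun ε => (f y - f (y - ε)) / ε) (𝓝[>] (0:ℝ)) (𝓝 d) := by
  rw [hasDerivWithinAt_iff_tendsto_slope] at h
  have h1 : Tendsto (fun ε : ℝ => y - ε) (𝓝[>] 0) (𝓝[Set.Icc 0 y \ {y}] y) := by
    rw [tendsto_nhdsWithin_iff]
    constructor
    · have : Tendsto (fun ε : ℝ => y - ε) (𝓝 0) (𝓝 (y - 0)) :=
        tendsto_const_nhds.sub tendsto_id
      simpa using this.mono_left nhdsWithin_le_nhds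
    · filter_upwards [Ioo_mem_nhdsGT_of_mem (show (0:ℝ) ∈ Set.Ico 0 y from
        ⟨le_refl 0, hy⟩)] with ε hε
      refine ⟨⟨by linarith [hε.2], by linarith [hε.1]⟩, ?_⟩
      simp only [Set.mem_singleton_iff]
      intro hc; linarith [hε.1, (by linarith : ε = 0)]
  have h2 := h.comp h1
  refine h2.congr fun ε => ?_
  simp only [Function.comp_apply, slope_def_field]
  rw [show y - ε - y = -ε by ring, div_neg, ← neg_div, neg_sub]



noncomputable section

/-- KKT conditions for the convex dispatch subproblem: if `x°` minimizes
`Σ_{i∈S} c_i(x_i)` over `{x : 0 ≤ x_i ≤ xmax_i (i ∈ S), Σ_{i∈S} x_i = d'}`, then there is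
a multiplier `λ` with `∂₋c_i(xmax_i) ≤ λ` whenever `x_i° = xmax_i`, `λ ≤ ∂₊c_i(0)`
whenever `x_i° = 0`, and `∂₋c_i(x_i°) ≤ λ ≤ ∂₊c_i(x_i°)` whenever `0 < x_i° < xmax_i`. -/
theorem stmt_17 (n : ℕ) (S : Finset (Fin n)) (hS : S.Nonempty)
    (xmax : Fin n → ℝ) (c : Fin n → ℝ → ℝ)
    (hxmax : ∀ i ∈ S, 0 < xmax i)
    (hconv : ∀ i ∈ S, ConvexOn ℝ (Set.Icc 0 (xmax i)) (c i))
    (hmono : ∀ i ∈ S, MonotoneOn (c i) (Set.Icc 0 (xmax i)))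
    (hcont : ∀ i ∈ S, ContinuousOn (c i) (Set.Icc 0 (xmax i)))
    (hc0 : ∀ i ∈ S, c i 0 = 0)
    (dp dm : Fin n → ℝ → ℝ)
    (hdp : ∀ i ∈ S, ∀ y ∈ Set.Ico (0 : ℝ) (xmax i),
      HasDerivWithinAt (c i) (dp i y) (Set.Icc y (xmax i)) y)
    (hdm : ∀ i ∈ S, ∀ y ∈ Set.Ioc (0 : ℝ) (xmax i),
      HasDerivWithinAt (c i) (dm i y) (Set.Icc 0 y) y)
    (d' : ℝ) (hd'0 : 0 ≤ d') (hd' : d' ≤ ∑ i ∈ S, xmax i)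
    (x0 : Fin n → ℝ)
    (hx0feas : ∀ i ∈ S, x0 i ∈ Set.Icc 0 (xmax i)) (hx0sum : ∑ i ∈ S, x0 i = d')
    (hx0min : ∀ x : Fin n → ℝ, (∀ i ∈ S, x i ∈ Set.Icc 0 (xmax i)) →
      ∑ i ∈ S, x i = d' → ∑ i ∈ S, c i (x0 i) ≤ ∑ i ∈ S, c i (x i)) :
    ∃ lam : ℝ,
      (∀ i ∈ S, x0 i = xmax i → dm i (xmax i) ≤ lam)
      ∧ (∀ i ∈ S, x0 i = 0 → lam ≤ dp i 0)
      ∧ (∀ i ∈ S, x0 i ∈ Set.Ioo 0 (xmax i) → dm i (x0 i) ≤ lam ∧ lam ≤ dp i (x0 i)) := by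
  have main : ∀ i ∈ S, ∀ j ∈ S, 0 < x0 i → x0 j < xmax j →
      dm i (x0 i) ≤ dp j (x0 j) := by
    intro i hi j hj hi0 hjM
    have hxi := hx0feas i hi
    have hxj := hx0feas j hj
    have tl := tendsto_slope_left_aux (c i) (dm i (x0 i)) (x0 i) hi0
      (hdm i hi (x0 i) ⟨hi0, hxi.2⟩)
    have tr := tendsto_slope_right_aux (c j) (dp j (x0 j)) (x0 j) (xmax j) hjM
      (hdp j hj (x0 j) ⟨hxj.1, hjM⟩)
    refine le_of_tendsto_of_tendsto tl tr ?_
    have hm : (0:ℝ) < min (x0 i) (xmax j - x0 j) := lt_min hi0 (by linarith)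
    filter_upwards [Ioo_mem_nhdsGT_of_mem
      (show (0:ℝ) ∈ Set.Ico 0 (min (x0 i) (xmax j - x0 j)) from ⟨le_refl 0, hm⟩)] with ε hε
    have hε0 : 0 < ε := hε.1
    have hεi : ε < x0 i := lt_of_lt_of_le hε.2 (min_le_left _ _)
    have hεj : ε < xmax j - x0 j := lt_of_lt_of_le hε.2 (min_le_right _ _)
    rcases eq_or_ne i j with rfl | hij
    · -- convexity case
      have h3 := (hconv i hi).slope_mono_adjacent
        (x := x0 i - ε) (y := x0 i) (z := x0 i + ε)
        ⟨by linarith, by linarith [hxi.2]⟩ ⟨by linarith [hxi.1], by linarith⟩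
        (by linarith) (by linarith)
      rw [show x0 i - (x0 i - ε) = ε from by ring,
        show x0 i + ε - x0 i = ε from by ring] at h3
      exact h3
    · -- exchange case
      set x : Fin n → ℝ := fun k => if k = i then x0 i - ε else if k = j then x0 j + ε else x0 k
        with hxdef
      have hxi' : x i = x0 i - ε := by simp [hxdef]
      have hxj' : x j = x0 j + ε := by simp [hxdef, Ne.symm hij]
      have hxk : ∀ k, k ≠ i → k ≠ j → x k = x0 k := by
        intro k h1 h2; simp [hxdef, h1, h2]
      have hsub : ({i, j} : Finset (Fin n)) ⊆ S := by
        refine Finset.insert_subset hi (Finset.singleton_subset_iff.2 hj)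
      have hsum_aux : ∀ g : Fin n → ℝ, (∀ k, k ≠ i → k ≠ j → g k = 0) →
          ∑ k ∈ S, g k = g i + g j := by
        intro g hg
        rw [← Finset.sum_subset hsub (fun k _ hk => hg k
          (fun h => hk (by simp [h])) (fun h => hk (by simp [h])))]
        exact Finset.sum_pair hij
      have hfeas : ∀ k ∈ S, x k ∈ Set.Icc 0 (xmax k) := by
        intro k hk
        rcases eq_or_ne k i with rfl | h1
        · rw [hxi']; exact ⟨by linarith, by linarith [hxi.2]⟩
        rcases eq_or_ne k j with rfl | h2
        · rw [hxj']; exact ⟨by linarith [hxj.1], by linarith⟩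
        · rw [hxk k h1 h2]; exact hx0feas k hk
      have hsumx : ∑ k ∈ S, x k = d' := by
        have e2 : ∑ k ∈ S, (x k - x0 k) = 0 := by
          rw [hsum_aux _ (fun k h1 h2 => by rw [hxk k h1 h2]; ring)]
          rw [hxi', hxj']; ring
        have e1 : ∑ k ∈ S, x k = ∑ k ∈ S, x0 k + ∑ k ∈ S, (x k - x0 k) := by
          rw [← Finset.sum_add_distrib]; exact Finset.sum_congr rfl fun k _ => by ring
        rw [e1, e2, hx0sum]; ring
      have hopt := hx0min x hfeas hsumx
      have e3 : ∑ k ∈ S, (c k (x k) - c k (x0 k))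
          = (c i (x i) - c i (x0 i)) + (c j (x j) - c j (x0 j)) :=
        hsum_aux _ (fun k h1 h2 => by rw [hxk k h1 h2]; ring)
      have e4 : ∑ k ∈ S, (c k (x k) - c k (x0 k))
          = ∑ k ∈ S, c k (x k) - ∑ k ∈ S, c k (x0 k) := by
        rw [Finset.sum_sub_distrib]
      have hnum : c i (x0 i) - c i (x0 i - ε) ≤ c j (x0 j + ε) - c j (x0 j) := by
        rw [hxi', hxj'] at e3
        have : (0:ℝ) ≤ (c i (x0 i - ε) - c i (x0 i)) + (c j (x0 j + ε) - c j (x0 j)) := by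
          rw [← e3, e4]; linarith
        linarith
      exact div_le_div_of_nonneg_right hnum hε0.le
  classical
  set A := S.filter (fun k => 0 < x0 k) with hAdef
  by_cases hAne : A.Nonempty
  · refine ⟨A.sup' hAne (fun k => dm k (x0 k)), ?_, ?_, ?_⟩
    · intro i him hieq
      have hiA : i ∈ A := Finset.mem_filter.2 ⟨him, hieq ▸ hxmax i him⟩
      have := Finset.le_sup' (fun k => dm k (x0 k)) hiA
      rw [hieq] at this; exact this
    · intro i him hieq
      have hlt : x0 i < xmax i := hieq ▸ hxmax i him
      rw [show (0:ℝ) = x0 i from hieq.symm]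
      refine Finset.sup'_le hAne _ fun k hk => ?_
      have hk' := Finset.mem_filter.1 hk
      exact main k hk'.1 i him hk'.2 hlt
    · intro i him hio
      have hiA : i ∈ A := Finset.mem_filter.2 ⟨him, hio.1⟩
      refine ⟨Finset.le_sup' (fun k => dm k (x0 k)) hiA, ?_⟩
      refine Finset.sup'_le hAne _ fun k hk => ?_
      have hk' := Finset.mem_filter.1 hk
      exact main k hk'.1 i him hk'.2 hio.2
  · have hall : ∀ k ∈ S, x0 k = 0 := by
      intro k hk
      by_contra h
      exact hAne ⟨k, Finset.mem_filter.2 ⟨hk, lt_of_le_of_ne (hx0feas k hk).1 (Ne.symm h)⟩⟩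
    refine ⟨S.inf' hS (fun k => dp k (x0 k)), ?_, ?_, ?_⟩
    · intro i him hieq
      exact absurd (hieq.symm ▸ hall i him) (ne_of_gt (hxmax i him))
    · intro i him hieq
      rw [show (0:ℝ) = x0 i from hieq.symm]
      exact Finset.inf'_le _ him
    · intro i him hio
      exact absurd (hall i him) (ne_of_gt hio.1)
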